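/- Let F ∈ B_c have bounded total variation VF on ℝ, and let t > 0. Then the total variation over ℝ of the function x ↦ u(x,t) = ∫_ℝ F(x−ξ) Θ_t'(ξ) dξ is at most VF / √(πt). -/

import Mathlib

open MeasureTheory Filter Topology

lemma integral_Ioi_mul_exp {b : ℝ} (hb : 0 < b) :
    ∫ x in Set.Ioi (0:ℝ), x * Real.exp (-b * x ^ 2) = 1 / (2 * b) := by
  have hderiv : ∀ x ∈ Set.Ici (0:ℝ),
      HasDerivAt (fun x : ℝ => -(1/(2*b)) * Real.exp (-b * x ^ 2))
        (x * Real.exp (-b * x ^ 2)) x := by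
    intro x _
    have h1 : HasDerivAt (fun x : ℝ => -b * x ^ 2) (-b * (2 * x)) x := by
      simpa using (hasDerivAt_pow 2 x).const_mul (-b)
    have h2 := (h1.exp).const_mul (-(1/(2*b)))
    convert h2 using 1
    · rfl
    · rfl
    field_simp
  have htop : Tendsto (fun x : ℝ => -(1/(2*b)) * Real.exp (-b * x ^ 2)) atTop (nhds 0) := by
    have h0 : Tendsto (fun x : ℝ => b * x ^ 2) atTop atTop :=
      (tendsto_pow_atTop (n := 2) (by norm_num)).const_mul_atTop hb
    have h1 : Tendsto (fun x : ℝ => -b * x ^ 2) atTop atBot := by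
      simpa [neg_mul] using tendsto_neg_atBot_iff.mpr h0
    have := (Real.tendsto_exp_atBot.comp h1).const_mul (-(1/(2*b)))
    simpa using this
  have := integral_Ioi_of_hasDerivAt_of_tendsto' hderiv
    (integrable_mul_exp_neg_mul_sq hb).integrableOn htop
  simpa using this

lemma integral_abs_mul_exp {b : ℝ} (hb : 0 < b) :
    ∫ x : ℝ, |x| * Real.exp (-b * x ^ 2) = 1 / b := by
  have h2 := integral_comp_abs (f := fun y => y * Real.exp (-b * y ^ 2))
  simp only [sq_abs] at h2
  rw [h2, integral_Ioi_mul_exp hb]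
  field_simp

/-- The Gauss–Weierstrass heat kernel `Θ_t(x) = (4πt)^(−1/2) exp(−x²/(4t))` for `t > 0`. -/
noncomputable def heatK (t x : ℝ) : ℝ :=
  (Real.sqrt (4 * Real.pi * t))⁻¹ * Real.exp (-x ^ 2 / (4 * t))

/-- Spatial derivative of the heat kernel: `Θ_t'(ξ) = −ξ Θ_t(ξ)/(2t)`. -/
noncomputable def heatK' (t x : ℝ) : ℝ := -x * heatK t x / (2 * t)

/-- `F ∈ B_c`: continuous, vanishing at `−∞`, with a finite limit at `+∞`. -/
def memBc (F : ℝ → ℝ) : Prop :=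
  Continuous F ∧ Tendsto F atBot (nhds (0 : ℝ)) ∧ ∃ L : ℝ, Tendsto F atTop (nhds L)

/-- Heat convolution `u(x,t) = ∫ F(x−ξ) Θ_t'(ξ) dξ` of the distribution `f = F'`. -/
noncomputable def heatConv (F : ℝ → ℝ) (t x : ℝ) : ℝ := ∫ ξ : ℝ, F (x - ξ) * heatK' t ξ

lemma heatK'_eq (t : ℝ) (x : ℝ) :
    heatK' t x = (-(Real.sqrt (4*Real.pi*t))⁻¹/(2*t)) * (x * Real.exp (-(4*t)⁻¹ * x^2)) := by
  unfold heatK' heatK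
  rw [show -x^2/(4*t) = -(4*t)⁻¹ * x^2 by ring]
  ring

lemma heatK'_integrable {t : ℝ} (ht : 0 < t) : Integrable (heatK' t) := by
  have hb : (0:ℝ) < (4*t)⁻¹ := by positivity
  have := (integrable_mul_exp_neg_mul_sq hb).const_mul (-(Real.sqrt (4*Real.pi*t))⁻¹/(2*t))
  refine this.congr ?_
  filter_upwards with x
  rw [heatK'_eq]

lemma heatK'_abs_integral {t : ℝ} (ht : 0 < t) :
    ∫ x : ℝ, |heatK' t x| = (Real.sqrt (Real.pi * t))⁻¹ := by
  have hb : (0:ℝ) < (4*t)⁻¹ := by positivity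
  have hs : 0 < Real.sqrt (4*Real.pi*t) := Real.sqrt_pos.mpr (by positivity)
  have habs : ∀ x : ℝ, |heatK' t x|
      = ((Real.sqrt (4*Real.pi*t))⁻¹/(2*t)) * (|x| * Real.exp (-(4*t)⁻¹ * x^2)) := by
    intro x
    rw [heatK'_eq, abs_mul, abs_mul, abs_div, abs_neg,
      abs_of_pos (inv_pos.mpr hs), abs_of_pos (by linarith : (0:ℝ) < 2*t),
      abs_of_pos (Real.exp_pos _)]
  have hst : Real.sqrt (4*Real.pi*t) = 2 * Real.sqrt (Real.pi*t) := by
    rw [show 4*Real.pi*t = 4*(Real.pi*t) by ring, Real.sqrt_mul (by norm_num) ,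
      show (4:ℝ) = 2^2 by norm_num, Real.sqrt_sq (by norm_num)]
  calc ∫ x : ℝ, |heatK' t x|
      = ∫ x : ℝ, ((Real.sqrt (4*Real.pi*t))⁻¹/(2*t)) * (|x| * Real.exp (-(4*t)⁻¹ * x^2)) := by
        congr 1; funext x; exact habs x
    _ = ((Real.sqrt (4*Real.pi*t))⁻¹/(2*t)) * ∫ x : ℝ, |x| * Real.exp (-(4*t)⁻¹ * x^2) :=
        integral_const_mul _ _
    _ = ((Real.sqrt (4*Real.pi*t))⁻¹/(2*t)) * (1/(4*t)⁻¹) := by rw [integral_abs_mul_exp hb]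
    _ = (Real.sqrt (Real.pi * t))⁻¹ := by
        rw [hst]
        have h2 : 0 < Real.sqrt (Real.pi*t) := Real.sqrt_pos.mpr (by positivity)
        field_simp
        ring

/-- If `F ∈ B_c` has bounded total variation `VF` on `ℝ` and `t > 0`, then the total
variation of `x ↦ u(x,t)` over `ℝ` is at most `VF/√(πt)`. -/
theorem stmt8 (F : ℝ → ℝ) (hF : memBc F) (hBV : BoundedVariationOn F Set.univ)
    (t : ℝ) (ht : 0 < t) :
    eVariationOn (fun x => heatConv F t x) Set.univ
      ≤ eVariationOn F Set.univ / ENNReal.ofReal (Real.sqrt (Real.pi * t)) := by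
  obtain ⟨hFc, -, -⟩ := hF
  have hπt : 0 < Real.pi * t := by positivity
  have hsqrt : 0 < Real.sqrt (Real.pi * t) := Real.sqrt_pos.mpr hπt
  have hKint : Integrable (heatK' t) := heatK'_integrable ht
  set V := (eVariationOn F Set.univ).toReal with hVdef
  have hFbdd : ∀ x, ‖F x‖ ≤ ‖F 0‖ + V := by
    intro x
    have h1 : edist (F x) (F 0) ≤ eVariationOn F Set.univ :=
      eVariationOn.edist_le F (Set.mem_univ x) (Set.mem_univ 0)
    have h2 : dist (F x) (F 0) ≤ V := by
      rw [← ENNReal.ofReal_le_iff_le_toReal hBV, ← edist_dist]; exact h1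
    rw [Real.dist_eq] at h2
    have h3 := abs_sub_abs_le_abs_sub (F x) (F 0)
    simp only [Real.norm_eq_abs]
    linarith
  have hmul : ∀ x : ℝ, Integrable (fun ξ => F (x - ξ) * heatK' t ξ) := by
    intro x
    exact hKint.bdd_mul ((hFc.comp (continuous_const.sub continuous_id)).aestronglyMeasurable)
      (ae_of_all _ fun ξ => hFbdd _)
  have hpair : ∀ a b : ℝ, |heatConv F t a - heatConv F t b|
      ≤ ∫ ξ : ℝ, |F (a - ξ) - F (b - ξ)| * |heatK' t ξ| := by
    intro a b
    have hsub : heatConv F t a - heatConv F t b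
        = ∫ ξ : ℝ, (F (a - ξ) - F (b - ξ)) * heatK' t ξ := by
      rw [heatConv, heatConv, ← integral_sub (hmul a) (hmul b)]
      congr 1; funext ξ; ring
    rw [hsub]
    simpa [Real.norm_eq_abs, abs_mul] using
      norm_integral_le_integral_norm (μ := volume) (fun ξ : ℝ => (F (a-ξ) - F (b-ξ)) * heatK' t ξ)
  have hdiffint : ∀ a b : ℝ, Integrable (fun ξ => |F (a-ξ) - F (b-ξ)| * |heatK' t ξ|) := by
    intro a b
    have h1 : Integrable (fun ξ => (F (a-ξ) - F (b-ξ)) * heatK' t ξ) := by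
      have := (hmul a).sub (hmul b)
      refine this.congr ?_
      filter_upwards with ξ
      simp only [Pi.sub_apply]
      ring
    simpa [abs_mul] using h1.abs
  rw [eVariationOn]
  refine iSup_le ?_
  rintro ⟨n, u, hu, -⟩
  have key : ∑ i ∈ Finset.range n, |heatConv F t (u (i+1)) - heatConv F t (u i)|
      ≤ V * (Real.sqrt (Real.pi * t))⁻¹ := by
    calc ∑ i ∈ Finset.range n, |heatConv F t (u (i+1)) - heatConv F t (u i)|
        ≤ ∑ i ∈ Finset.range n, ∫ ξ : ℝ, |F (u (i+1) - ξ) - F (u i - ξ)| * |heatK' t ξ| :=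
          Finset.sum_le_sum fun i _ => hpair _ _
      _ = ∫ ξ : ℝ, ∑ i ∈ Finset.range n, |F (u (i+1) - ξ) - F (u i - ξ)| * |heatK' t ξ| :=
          (integral_finset_sum _ fun i _ => hdiffint _ _).symm
      _ ≤ ∫ ξ : ℝ, V * |heatK' t ξ| := by
          refine integral_mono (integrable_finset_sum _ fun i _ => hdiffint _ _)
            (hKint.abs.const_mul V) ?_
          intro ξ
          dsimp only
          rw [← Finset.sum_mul]
          refine mul_le_mul_of_nonneg_right ?_ (abs_nonneg _)
          have hmono : Monotone (fun i => u i - ξ) := fun i j h => sub_le_sub_right (hu h) ξ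
          have h1 := eVariationOn.sum_le (f := F) (n := n) hmono (fun i => Set.mem_univ _)
          have h2 : ENNReal.ofReal (∑ i ∈ Finset.range n, |F (u (i+1) - ξ) - F (u i - ξ)|)
              ≤ eVariationOn F Set.univ := by
            rw [ENNReal.ofReal_sum_of_nonneg (fun i _ => abs_nonneg _)]
            refine le_trans (le_of_eq (Finset.sum_congr rfl fun i _ => ?_)) h1
            rw [edist_dist, Real.dist_eq]
          exact (ENNReal.ofReal_le_iff_le_toReal hBV).mp h2
      _ = V * ∫ ξ : ℝ, |heatK' t ξ| := integral_const_mul _ _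
      _ = V * (Real.sqrt (Real.pi * t))⁻¹ := by rw [heatK'_abs_integral ht]
  have hsum : ∑ i ∈ Finset.range n,
        edist ((fun x => heatConv F t x) (u (i+1))) ((fun x => heatConv F t x) (u i))
      = ENNReal.ofReal (∑ i ∈ Finset.range n, |heatConv F t (u (i+1)) - heatConv F t (u i)|) := by
    rw [ENNReal.ofReal_sum_of_nonneg (fun i _ => abs_nonneg _)]
    exact Finset.sum_congr rfl fun i _ => by rw [edist_dist, Real.dist_eq]
  rw [hsum]
  calc ENNReal.ofReal (∑ i ∈ Finset.range n, |heatConv F t (u (i+1)) - heatConv F t (u i)|)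
      ≤ ENNReal.ofReal (V * (Real.sqrt (Real.pi * t))⁻¹) := ENNReal.ofReal_le_ofReal key
    _ = ENNReal.ofReal V / ENNReal.ofReal (Real.sqrt (Real.pi * t)) := by
        rw [← ENNReal.ofReal_div_of_pos hsqrt, div_eq_mul_inv]
    _ = eVariationOn F Set.univ / ENNReal.ofReal (Real.sqrt (Real.pi * t)) := by
        rw [hVdef, ENNReal.ofReal_toReal hBV]
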